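/- For a > 0 and n >= 1, the value of Q_n at the purely imaginary point ai is Q_n(ai) = -(i)^n * sqrt(a^2+1) * (a + sqrt(a^2+1))^{n-1}, where Q_n satisfies Q_1(z) = -(az+i)/sqrt(a^2+1), Q_2(z) = (-(a+sqrt(a^2+1))z^2 - iz + sqrt(a^2+1))/sqrt(a^2+1), and Q_{n+1}(z) = 2z Q_n(z) - Q_{n-1}(z). In particular |Q_n(ai)| = sqrt(a^2+1) (a+sqrt(a^2+1))^{n-1}. -/

import Mathlib

/-- Value of the recursively defined polynomial `Q_n` at the purely imaginary point `ai`. -/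
theorem stmt6 (a : ℝ) (ha : 0 < a) (Q : ℕ → ℂ → ℂ)
    (hQ1 : ∀ z : ℂ, Q 1 z = -((a : ℂ) * z + Complex.I) / (Real.sqrt (a ^ 2 + 1) : ℂ))
    (hQ2 : ∀ z : ℂ, Q 2 z =
      (-(((a : ℂ) + (Real.sqrt (a ^ 2 + 1) : ℂ))) * z ^ 2 - Complex.I * z +
        (Real.sqrt (a ^ 2 + 1) : ℂ)) / (Real.sqrt (a ^ 2 + 1) : ℂ))
    (hrec : ∀ n : ℕ, 2 ≤ n → ∀ z : ℂ, Q (n + 1) z = 2 * z * Q n z - Q (n - 1) z) :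
    ∀ n : ℕ, 1 ≤ n →
      Q n ((a : ℂ) * Complex.I) =
        -Complex.I ^ n * (Real.sqrt (a ^ 2 + 1) : ℂ) *
          ((a : ℂ) + (Real.sqrt (a ^ 2 + 1) : ℂ)) ^ (n - 1) ∧
      ‖Q n ((a : ℂ) * Complex.I)‖ =
        Real.sqrt (a ^ 2 + 1) * (a + Real.sqrt (a ^ 2 + 1)) ^ (n - 1) := by
  set s : ℝ := Real.sqrt (a ^ 2 + 1) with hs
  have hs2 : s ^ 2 = a ^ 2 + 1 := Real.sq_sqrt (by positivity)
  have hspos : 0 < s := Real.sqrt_pos.mpr (by positivity)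
  have hsne : (s : ℂ) ≠ 0 := by exact_mod_cast hspos.ne'
  have hsc : (s : ℂ) ^ 2 = (a : ℂ) ^ 2 + 1 := by exact_mod_cast hs2
  -- main formula by two-step induction
  have key : ∀ n : ℕ, 1 ≤ n →
      Q n ((a : ℂ) * Complex.I) =
        -Complex.I ^ n * (s : ℂ) * ((a : ℂ) + (s : ℂ)) ^ (n - 1) := by
    have H : ∀ n : ℕ, 1 ≤ n →
        (Q n ((a : ℂ) * Complex.I) =
          -Complex.I ^ n * (s : ℂ) * ((a : ℂ) + (s : ℂ)) ^ (n - 1)) ∧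
        (Q (n + 1) ((a : ℂ) * Complex.I) =
          -Complex.I ^ (n + 1) * (s : ℂ) * ((a : ℂ) + (s : ℂ)) ^ n) := by
      intro n hn
      induction n, hn using Nat.le_induction with
      | base =>
        constructor
        · rw [hQ1]
          field_simp
          linear_combination hsc
        · rw [hQ2]
          field_simp
          linear_combination (-((s:ℂ) + (a:ℂ))) * hsc +
            ((s:ℂ)^3 + (a:ℂ)*(s:ℂ)^2 - (a:ℂ)^2*(s:ℂ) - (a:ℂ)^3 - (a:ℂ)) * Complex.I_sq
      | succ n hn ih =>
        refine ⟨ih.2, ?_⟩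
        rw [hrec (n + 1) (by omega), show n + 1 - 1 = n from rfl, ih.1, ih.2]
        have : Complex.I ^ (n + 1) = Complex.I ^ n * Complex.I := pow_succ _ _
        rw [show ((a:ℂ) + (s:ℂ)) ^ (n + 1) = ((a:ℂ) + (s:ℂ)) ^ (n-1) * ((a:ℂ) + (s:ℂ)) ^ 2 by
              rw [← pow_add]; congr 1; omega,
            show ((a:ℂ) + (s:ℂ)) ^ n = ((a:ℂ) + (s:ℂ)) ^ (n-1) * ((a:ℂ) + (s:ℂ)) by
              rw [← pow_succ]; congr 1; omega,
            show Complex.I ^ (n+2) = Complex.I ^ (n-1) * Complex.I ^ 3 by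
              rw [← pow_add]; congr 1; omega,
            show Complex.I ^ (n+1) = Complex.I ^ (n-1) * Complex.I ^ 2 by
              rw [← pow_add]; congr 1; omega,
            show Complex.I ^ n = Complex.I ^ (n-1) * Complex.I by
              rw [← pow_succ]; congr 1; omega]
        rw [show Complex.I ^ 3 = Complex.I ^ 2 * Complex.I from pow_succ _ _, Complex.I_sq]
        have hsq : ((a:ℂ) + (s:ℂ)) ^ 2 = 2 * (a:ℂ) * ((a:ℂ) + (s:ℂ)) + 1 := by
          have : ((a:ℂ) + (s:ℂ)) ^ 2 = (a:ℂ)^2 + 2*(a:ℂ)*(s:ℂ) + (s:ℂ)^2 := by ring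
          rw [this, hsc]; ring
        rw [hsq]; ring
    intro n hn; exact (H n hn).1
  intro n hn
  have h1 := key n hn
  refine ⟨h1, ?_⟩
  rw [h1]
  have has : (0:ℝ) ≤ a + s := by positivity
  rw [show ((a:ℂ) + (s:ℂ)) = ((a + s : ℝ) : ℂ) by push_cast; ring]
  rw [norm_mul, norm_mul, norm_neg, norm_pow, norm_pow, Complex.norm_I,
      Complex.norm_real, Complex.norm_real, one_pow, one_mul,
      Real.norm_of_nonneg hspos.le, Real.norm_of_nonneg has]
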